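/- Let A ⊆ ℕ. If for every a ∉ A there exists b ∈ A with b < a such that no pair x, y ∈ A satisfies y − x = a − b, then there exists a subtraction set S ⊆ ℕ₊ such that A is exactly the set of P-positions of the subtraction game with subtraction set S. -/
import Mathlib


/-- P-positions of the subtraction game with subtraction set `S`. -/
def subP (S : Set ℕ) : ℕ → Prop
  | x => ∀ s, s ∈ S → ∀ _ : 0 < s, ∀ _ : s ≤ x, ¬ subP S (x - s)
termination_by x => x
decreasing_by all_goals omega

/-- If for every `a ∉ A` there is `b ∈ A`, `b < a`, such that no `x, y ∈ A` satisfy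
`y - x = a - b`, then `A` is the set of P-positions of some subtraction game. -/
theorem exists_subtraction_game (A : Set ℕ)
    (h : ∀ a ∉ A, ∃ b ∈ A, b < a ∧ ¬ ∃ x ∈ A, ∃ y ∈ A, x + (a - b) = y) :
    ∃ S : Set ℕ, (∀ s ∈ S, 0 < s) ∧ (∀ x, x ∈ A ↔ subP S x) := by
  classical
  refine ⟨{d | 0 < d ∧ ¬ ∃ x ∈ A, ∃ y ∈ A, x + d = y}, fun s hs => hs.1, ?_⟩
  intro x
  induction x using Nat.strong_induction_on with
  | _ x ih =>
    rw [subP]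
    constructor
    · intro hx s hs hpos hle hP
      have hxs : x - s ∈ A := (ih (x - s) (by omega)).mpr hP
      exact hs.2 ⟨x - s, hxs, x, hx, by omega⟩
    · intro hP
      by_contra hx
      obtain ⟨b, hb, hba, hno⟩ := h x hx
      refine hP (x - b) ⟨by omega, hno⟩ (by omega) (by omega) ?_
      refine (ih (x - (x - b)) (by omega)).mp ?_
      simpa [Nat.sub_sub_self hba.le] using hb
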